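/- For every λ > 0, K ≥ 1, α ∈ [1,2], and integer m ≥ 1, the function H(r) = f_α(r^m) + r·(1+r^m)^{α-1}/(1-r^m)^{α+1} + λ·((2K/(K+1))·f_α(r) - r) - 1/(2α) is strictly increasing on (0,1), negative at 0, tends to +∞ as r → 1⁻, and has a unique zero in (0,1). -/

import Mathlib

open Real Set Filter

set_option maxHeartbeats 1000000 in
/-- Monotonicity, sign at `0`, divergence at `1⁻`, and unique zero in `(0,1)` of
`H(r) = f_α(r^m) + r(1+r^m)^{α-1}/(1-r^m)^{α+1} + λ((2K/(K+1)) f_α(r) - r) - 1/(2α)`. -/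
theorem stmt17 (K α lam : ℝ) (hK : 1 ≤ K) (hα : α ∈ Set.Icc (1:ℝ) 2) (hlam : 0 < lam)
    (m : ℕ) (hm : 1 ≤ m)
    (f H : ℝ → ℝ)
    (hf : ∀ r, f r = (1 / (2 * α)) * (((1 + r) / (1 - r)) ^ α - 1))
    (hH : ∀ r, H r = f (r ^ m) + r * (1 + r ^ m) ^ (α - 1) / (1 - r ^ m) ^ (α + 1)
      + lam * ((2 * K / (K + 1)) * f r - r) - 1 / (2 * α)) :
    StrictMonoOn H (Set.Ioo (0:ℝ) 1) ∧ H 0 < 0 ∧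
      Filter.Tendsto H (nhdsWithin 1 (Set.Iio (1:ℝ))) Filter.atTop ∧
      (∃! r, r ∈ Set.Ioo (0:ℝ) 1 ∧ H r = 0) := by
  obtain ⟨hα1, hα2⟩ := hα
  have hα0 : (0:ℝ) < α := by linarith
  have hm0 : m ≠ 0 := by omega
  have hc : (1:ℝ) ≤ 2 * K / (K + 1) := by
    rw [le_div_iff₀ (by linarith)]; linarith
  have hc0 : (0:ℝ) ≤ 2 * K / (K + 1) := by linarith
  have hfeq : f = fun r => (1 / (2 * α)) * (((1 + r) / (1 - r)) ^ α - 1) := funext hf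
  -- basic facts about the base (1+x)/(1-x)
  have hu1 : ∀ x ∈ Ico (0:ℝ) 1, (1:ℝ) ≤ (1 + x) / (1 - x) := by
    intro x hx
    rw [le_div_iff₀ (by linarith [hx.2])]
    linarith [hx.1]
  have hf0 : ∀ x ∈ Ico (0:ℝ) 1, 0 ≤ f x := by
    intro x hx
    rw [hf]
    have h1 : (1:ℝ) ≤ ((1 + x) / (1 - x)) ^ α := Real.one_le_rpow (hu1 x hx) hα0.le
    have h2 : (0:ℝ) ≤ 1 / (2 * α) := by positivity
    nlinarith
  have hpowmem : ∀ r ∈ Ioo (0:ℝ) 1, r ^ m ∈ Ioo (0:ℝ) 1 := by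
    intro r hr
    exact ⟨pow_pos hr.1 m, pow_lt_one₀ hr.1.le hr.2 hm0⟩
  -- strict monotonicity of f on [0,1)
  have hf_mono : StrictMonoOn f (Ico (0:ℝ) 1) := by
    intro a ha b hb hab
    rw [hf, hf]
    have hub : (1 + a) / (1 - a) < (1 + b) / (1 - b) := by
      rw [div_lt_div_iff₀ (by linarith [ha.2]) (by linarith [hb.2])]
      nlinarith
    have h1 := Real.rpow_lt_rpow (le_trans zero_le_one (hu1 a ha)) hub hα0
    have h2 : (0:ℝ) < 1 / (2 * α) := by positivity
    exact mul_lt_mul_of_pos_left (by linarith) h2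
  -- continuity of f on [0,1)
  have hfc : ContinuousOn f (Ico (0:ℝ) 1) := by
    rw [hfeq]
    apply ContinuousOn.mul continuousOn_const
    apply ContinuousOn.sub _ continuousOn_const
    apply ContinuousOn.rpow_const
    · exact (continuousOn_const.add continuousOn_id).div
        (continuousOn_const.sub continuousOn_id)
        (fun x hx => by show (1:ℝ) - x ≠ 0; exact sub_ne_zero.mpr (ne_of_lt hx.2).symm)
    · exact fun x hx => Or.inr hα0.le
  -- derivative of g r = c * f r - r on (0,1)
  have hgder : ∀ r ∈ Ioo (0:ℝ) 1,
      HasDerivAt (fun r => 2 * K / (K + 1) * f r - r)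
        (2 * K / (K + 1) * (1 / (2 * α) *
          ((1 * (1 - r) - (1 + r) * (-1)) / (1 - r) ^ 2 * α * ((1 + r) / (1 - r)) ^ (α - 1))) - 1) r := by
    intro r hr
    rw [hfeq]
    have h1 : HasDerivAt (fun r : ℝ => (1 + r) / (1 - r))
        ((1 * (1 - r) - (1 + r) * (-1)) / (1 - r) ^ 2) r := by
      exact HasDerivAt.div ((hasDerivAt_id r).const_add 1)
        ((hasDerivAt_id r).const_sub 1) (by intro h; nlinarith [hr.2, sub_eq_zero.mp h])
    have h2 := h1.rpow_const (Or.inr hα1)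
    have h3 := (h2.sub_const 1).const_mul (1 / (2 * α))
    exact (h3.const_mul (2 * K / (K + 1))).sub (hasDerivAt_id r)
  -- the derivative is nonnegative
  have hgnn : ∀ r ∈ Ioo (0:ℝ) 1,
      0 ≤ 2 * K / (K + 1) * (1 / (2 * α) *
        ((1 * (1 - r) - (1 + r) * (-1)) / (1 - r) ^ 2 * α * ((1 + r) / (1 - r)) ^ (α - 1))) - 1 := by
    intro r hr
    have hd0 : (0:ℝ) < (1 - r) ^ 2 := by nlinarith [hr.2]
    have hd1 : (1 - r) ^ 2 ≤ 1 := by nlinarith [hr.1, hr.2]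
    have hX : (1:ℝ) ≤ ((1 + r) / (1 - r)) ^ (α - 1) :=
      Real.one_le_rpow (hu1 r ⟨hr.1.le, hr.2⟩) (by linarith)
    have e2 : 1 / (2 * α) * ((1 * (1 - r) - (1 + r) * (-1)) / (1 - r) ^ 2 * α *
        ((1 + r) / (1 - r)) ^ (α - 1)) = ((1 + r) / (1 - r)) ^ (α - 1) / (1 - r) ^ 2 := by
      field_simp
      ring
    rw [e2]
    have h3 : (1:ℝ) ≤ ((1 + r) / (1 - r)) ^ (α - 1) / (1 - r) ^ 2 := by
      rw [le_div_iff₀ hd0]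
      nlinarith
    nlinarith
  -- monotonicity of g on [0,1)
  have hg_mono : MonotoneOn (fun r => 2 * K / (K + 1) * f r - r) (Ico (0:ℝ) 1) := by
    apply monotoneOn_of_deriv_nonneg (convex_Ico 0 1)
    · exact (continuousOn_const.mul hfc).sub continuousOn_id
    · rw [interior_Ico]
      exact fun r hr => (hgder r hr).differentiableAt.differentiableWithinAt
    · rw [interior_Ico]
      intro r hr
      rw [(hgder r hr).deriv]
      exact hgnn r hr
  -- strict monotonicity of H
  have hmono : StrictMonoOn H (Ioo (0:ℝ) 1) := by
    intro a ha b hb hab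
    rw [hH, hH]
    have ham := hpowmem a ha
    have hbm := hpowmem b hb
    have hpowlt : a ^ m < b ^ m := pow_lt_pow_left₀ hab ha.1.le hm0
    have hfm : f (a ^ m) < f (b ^ m) :=
      hf_mono ⟨ham.1.le, ham.2⟩ ⟨hbm.1.le, hbm.2⟩ hpowlt
    have hT2 : a * (1 + a ^ m) ^ (α - 1) / (1 - a ^ m) ^ (α + 1)
        < b * (1 + b ^ m) ^ (α - 1) / (1 - b ^ m) ^ (α + 1) := by
      have hd_a : (0:ℝ) < (1 - a ^ m) ^ (α + 1) :=
        Real.rpow_pos_of_pos (by linarith [ham.2]) _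
      have hd_b : (0:ℝ) < (1 - b ^ m) ^ (α + 1) :=
        Real.rpow_pos_of_pos (by linarith [hbm.2]) _
      have hdle : (1 - b ^ m) ^ (α + 1) ≤ (1 - a ^ m) ^ (α + 1) :=
        Real.rpow_le_rpow (by linarith [hbm.2]) (by linarith) (by linarith)
      have hXa : (0:ℝ) < (1 + a ^ m) ^ (α - 1) :=
        Real.rpow_pos_of_pos (by linarith [ham.1]) _
      have hXle : (1 + a ^ m) ^ (α - 1) ≤ (1 + b ^ m) ^ (α - 1) :=
        Real.rpow_le_rpow (by linarith [ham.1]) (by linarith) (by linarith)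
      have hnum : (0:ℝ) < a * (1 + a ^ m) ^ (α - 1) := mul_pos ha.1 hXa
      have hnumlt : a * (1 + a ^ m) ^ (α - 1) < b * (1 + b ^ m) ^ (α - 1) :=
        calc a * (1 + a ^ m) ^ (α - 1) < b * (1 + a ^ m) ^ (α - 1) :=
              mul_lt_mul_of_pos_right hab hXa
          _ ≤ b * (1 + b ^ m) ^ (α - 1) := mul_le_mul_of_nonneg_left hXle hb.1.le
      rw [div_lt_div_iff₀ hd_a hd_b]
      nlinarith [mul_le_mul_of_nonneg_left hdle hnum.le,
        mul_lt_mul_of_pos_right hnumlt hd_a]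
    have hg : 2 * K / (K + 1) * f a - a ≤ 2 * K / (K + 1) * f b - b :=
      hg_mono ⟨ha.1.le, ha.2⟩ ⟨hb.1.le, hb.2⟩ hab.le
    have hgl := mul_le_mul_of_nonneg_left hg hlam.le
    linarith
  -- H 0 < 0
  have hH0 : H 0 < 0 := by
    rw [hH, hf, hf]
    rw [zero_pow hm0]
    norm_num [Real.one_rpow]
    positivity
  -- continuity of H on [0,1)
  have hHc : ContinuousOn H (Ico (0:ℝ) 1) := by
    apply ContinuousOn.congr _ (fun x _ => hH x)
    apply ContinuousOn.sub _ continuousOn_const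
    apply ContinuousOn.add
    apply ContinuousOn.add
    · exact hfc.comp (continuous_pow m).continuousOn
        (fun x hx => ⟨pow_nonneg hx.1 m, pow_lt_one₀ hx.1 hx.2 hm0⟩)
    · apply ContinuousOn.div
      · exact continuousOn_id.mul
          ((continuousOn_const.add (continuous_pow m).continuousOn).rpow_const
            (fun x hx => Or.inr (by linarith)))
      · exact (continuousOn_const.sub (continuous_pow m).continuousOn).rpow_const
          (fun x hx => Or.inr (by linarith))
      · intro x hx
        have : x ^ m < 1 := pow_lt_one₀ hx.1 hx.2 hm0
        exact ne_of_gt (Real.rpow_pos_of_pos (by linarith) _)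
    · exact continuousOn_const.mul ((continuousOn_const.mul hfc).sub continuousOn_id)
  -- lower bound for H near 1
  have hlb : ∀ r ∈ Ioo (0:ℝ) 1, r ^ m / (α * (1 - r ^ m)) + (-lam - 1 / (2 * α)) ≤ H r := by
    intro r hr
    have hx := hpowmem r hr
    rw [hH, hf (r ^ m)]
    have e1 : (1:ℝ) ≤ (1 + r ^ m) / (1 - r ^ m) := hu1 _ ⟨hx.1.le, hx.2⟩
    have e2 : (1 + r ^ m) / (1 - r ^ m) ≤ ((1 + r ^ m) / (1 - r ^ m)) ^ α := by
      calc (1 + r ^ m) / (1 - r ^ m) = ((1 + r ^ m) / (1 - r ^ m)) ^ (1:ℝ) :=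
            (Real.rpow_one _).symm
        _ ≤ _ := Real.rpow_le_rpow_of_exponent_le e1 hα1
    have e3 : r ^ m / (α * (1 - r ^ m))
        ≤ 1 / (2 * α) * (((1 + r ^ m) / (1 - r ^ m)) ^ α - 1) := by
      have heq : r ^ m / (α * (1 - r ^ m))
          = 1 / (2 * α) * ((1 + r ^ m) / (1 - r ^ m) - 1) := by
        have h1 : (1:ℝ) - r ^ m ≠ 0 := ne_of_gt (by linarith [hx.2])
        have h2 : α ≠ 0 := ne_of_gt hα0
        field_simp
        ring
      rw [heq]
      have h2 : (0:ℝ) ≤ 1 / (2 * α) := by positivity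
      nlinarith
    have e4 : 0 ≤ r * (1 + r ^ m) ^ (α - 1) / (1 - r ^ m) ^ (α + 1) :=
      div_nonneg (mul_nonneg hr.1.le (Real.rpow_nonneg (by linarith [hx.1]) _))
        (Real.rpow_nonneg (by linarith [hx.2]) _)
    have e5 : -lam ≤ lam * (2 * K / (K + 1) * f r - r) := by
      have hfr : 0 ≤ f r := hf0 r ⟨hr.1.le, hr.2⟩
      have h1 : (0:ℝ) ≤ 2 * K / (K + 1) * f r := mul_nonneg hc0 hfr
      nlinarith [hr.2]
    linarith
  -- tendsto atTop
  have ht : Tendsto (fun r => r ^ m / (α * (1 - r ^ m)) + (-lam - 1 / (2 * α)))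
      (nhdsWithin 1 (Iio (1:ℝ))) atTop := by
    apply Filter.tendsto_atTop_add_const_right
    have t1 : Tendsto (fun r : ℝ => r ^ m) (nhdsWithin 1 (Iio (1:ℝ)))
        (nhdsWithin 1 (Iio (1:ℝ))) := by
      apply tendsto_nhdsWithin_of_tendsto_nhds_of_eventually_within
      · have := ((continuous_pow m).tendsto (1:ℝ)).mono_left
          (nhdsWithin_le_nhds (s := Iio (1:ℝ)))
        simpa using this
      · filter_upwards [Ioo_mem_nhdsLT_of_mem
          (⟨zero_lt_one, le_refl (1:ℝ)⟩ : (1:ℝ) ∈ Ioc 0 1)] with r hr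
        exact pow_lt_one₀ hr.1.le hr.2 hm0
    have t2 : Tendsto (fun x : ℝ => x / (α * (1 - x))) (nhdsWithin 1 (Iio (1:ℝ))) atTop := by
      have ta : Tendsto (fun x : ℝ => α * (1 - x)) (nhdsWithin 1 (Iio (1:ℝ)))
          (nhdsWithin 0 (Ioi (0:ℝ))) := by
        apply tendsto_nhdsWithin_of_tendsto_nhds_of_eventually_within
        · have : Tendsto (fun x : ℝ => α * (1 - x)) (nhds 1) (nhds (α * (1 - 1))) :=
            ((continuous_const.mul (continuous_const.sub continuous_id)).tendsto 1)
          simpa using this.mono_left (nhdsWithin_le_nhds (s := Iio (1:ℝ)))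
        · filter_upwards [self_mem_nhdsWithin] with x hx
          have hx1 : x < 1 := hx
          exact mul_pos hα0 (by linarith)
      have tb : Tendsto (fun x : ℝ => (α * (1 - x))⁻¹) (nhdsWithin 1 (Iio (1:ℝ))) atTop :=
        tendsto_inv_nhdsGT_zero.comp ta
      have tc : Tendsto (fun x : ℝ => x) (nhdsWithin 1 (Iio (1:ℝ))) (nhds 1) :=
        tendsto_id.mono_left nhdsWithin_le_nhds
      simpa [div_eq_mul_inv] using Filter.Tendsto.pos_mul_atTop zero_lt_one tc tb
    have := t2.comp t1
    simpa [Function.comp_def] using this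
  have htend : Tendsto H (nhdsWithin 1 (Iio (1:ℝ))) atTop := by
    apply Filter.tendsto_atTop_mono' _ _ ht
    filter_upwards [Ioo_mem_nhdsLT_of_mem
      (⟨zero_lt_one, le_refl (1:ℝ)⟩ : (1:ℝ) ∈ Ioc 0 1)] with r hr
    exact hlb r hr
  -- existence and uniqueness of the zero
  refine ⟨hmono, hH0, htend, ?_⟩
  obtain ⟨r0, hr0mem, hr0pos⟩ : ∃ r0, r0 ∈ Ioo (0:ℝ) 1 ∧ 0 < H r0 := by
    have h1 := htend.eventually_gt_atTop 0
    have h2 : ∀ᶠ r in nhdsWithin 1 (Iio (1:ℝ)), r ∈ Ioo (0:ℝ) 1 :=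
      Ioo_mem_nhdsLT_of_mem ⟨zero_lt_one, le_refl (1:ℝ)⟩
    obtain ⟨r0, h, h'⟩ := (h1.and h2).exists
    exact ⟨r0, h', h⟩
  have hsub : Icc (0:ℝ) r0 ⊆ Ico (0:ℝ) 1 :=
    fun z hz => ⟨hz.1, lt_of_le_of_lt hz.2 hr0mem.2⟩
  obtain ⟨x, hx, hx0⟩ := intermediate_value_Ioo hr0mem.1.le (hHc.mono hsub)
    (⟨hH0, hr0pos⟩ : (0:ℝ) ∈ Ioo (H 0) (H r0))
  have hxmem : x ∈ Ioo (0:ℝ) 1 := ⟨hx.1, lt_trans hx.2 hr0mem.2⟩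
  refine ⟨x, ⟨hxmem, hx0⟩, ?_⟩
  intro y hy
  exact hmono.injOn hy.1 hxmem (hy.2.trans hx0.symm)
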